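/- Let a, b be coprime integers with a ≥ 2. Then there exist infinitely many natural numbers X such that a·X + b is a (positive) prime number. -/

import Mathlib

theorem dirichlet_ap (a b : ℤ) (hab : IsCoprime a b) (ha : 2 ≤ a) :
    ∀ N : ℕ, ∃ X : ℕ, N < X ∧ 0 < a * X + b ∧ Prime (a * X + b) := by
  intro N
  set q : ℕ := a.toNat with hq
  have hqa : (q : ℤ) = a := Int.toNat_of_nonneg (by omega)
  have hq2 : 2 ≤ q := by omega
  haveI : NeZero q := ⟨by omega⟩
  have hunit : IsUnit ((b : ZMod q)) := by
    obtain ⟨u, v, huv⟩ := hab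
    have := congrArg (fun z : ℤ => (z : ZMod q)) huv
    push_cast at this
    have ha0 : ((a : ℤ) : ZMod q) = 0 := by
      rw [← hqa]; exact_mod_cast ZMod.natCast_self q
    rw [ha0] at this
    exact IsUnit.of_mul_eq_one (v : ZMod q) (by linear_combination this)
  obtain ⟨p, hpgt, hpp, hpmod⟩ :=
    Nat.forall_exists_prime_gt_and_eq_mod hunit (q * (N + 1) + b.natAbs)
  -- p ≡ b [ZMOD q], p large
  have hdvd : (q : ℤ) ∣ (p : ℤ) - b := by
    rw [← ZMod.intCast_zmod_eq_zero_iff_dvd]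
    push_cast
    rw [hpmod]
    ring
  obtain ⟨k, hk⟩ := hdvd
  have hblt : (b : ℤ) ≤ b.natAbs := Int.le_natAbs
  have hplarge : (q * (N + 1) + b.natAbs : ℤ) < p := by exact_mod_cast hpgt
  have hkpos : (N : ℤ) < k := by
    nlinarith [hk, hplarge, hblt, Int.natCast_nonneg b.natAbs]
  refine ⟨k.toNat, by omega, ?_, ?_⟩
  · have : a * k.toNat + b = p := by
      rw [Int.toNat_of_nonneg (by omega), ← hqa]; omega
    rw [this]; exact_mod_cast hpp.pos
  · have : a * k.toNat + b = p := by
      rw [Int.toNat_of_nonneg (by omega), ← hqa]; omega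
    rw [this]; exact Nat.prime_iff_prime_int.mp hpp
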